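/- For every integer m ≥ 1, there do not exist an integer r ≥ 1 and integers n_1 > n_2 > ⋯ > n_r > 0 with n_1 = m+1 such that |(−1)^r + 2·Σ_{i=1}^{r} (−1)^{i−1+n_i}| = 2m+1. -/

import Mathlib

lemma chain_aux (n : ℕ → ℕ) (r : ℕ)
    (hd : ∀ i j, 1 ≤ i → i < j → j ≤ r → n j < n i) :
    ∀ j i, 1 ≤ i → i ≤ j → j ≤ r → n j + (j - i) ≤ n i := by
  intro j
  induction j with
  | zero => intro i h1 h2 _; omega
  | succ k ih =>
    intro i h1 h2 h3
    rcases Nat.eq_or_lt_of_le h2 with h | h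
    · subst h; omega
    · have h4 : n (k+1) < n k := hd k (k+1) (by omega) (by omega) h3
      have h5 := ih i h1 (by omega) (by omega)
      omega

lemma abs_pow_neg_one (k : ℕ) : |(-1 : ℤ) ^ k| = 1 := by simp

lemma sum_bound (n : ℕ → ℕ) (s : Finset ℕ) :
    |∑ i ∈ s, (-1 : ℤ) ^ (i - 1 + n i)| ≤ (s.card : ℤ) := by
  calc |∑ i ∈ s, (-1 : ℤ) ^ (i - 1 + n i)|
      ≤ ∑ i ∈ s, |(-1 : ℤ) ^ (i - 1 + n i)| := Finset.abs_sum_le_sum_abs _ _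
    _ = ∑ i ∈ s, (1 : ℤ) := by simp
    _ = (s.card : ℤ) := by simp

theorem stmt_9 (m : ℕ) (hm : 1 ≤ m) :
    ¬ ∃ (r : ℕ) (n : ℕ → ℕ), 1 ≤ r ∧
      (∀ i, 1 ≤ i → i ≤ r → 0 < n i) ∧
      (∀ i j, 1 ≤ i → i < j → j ≤ r → n j < n i) ∧
      n 1 = m + 1 ∧
      |(-1 : ℤ) ^ r + 2 * ∑ i ∈ Finset.Icc 1 r, (-1 : ℤ) ^ (i - 1 + n i)| =
        2 * (m : ℤ) + 1 := by
  rintro ⟨r, n, hr, hpos, hdec, hn1, habs⟩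
  have hch := chain_aux n r hdec
  have hnr : 1 ≤ n r := hpos r hr le_rfl
  have hr1 : n r + (r - 1) ≤ n 1 := hch r 1 le_rfl hr le_rfl
  have hrle : r ≤ m + 1 := by omega
  rcases Nat.lt_or_ge r m with hlt | hge
  · -- r < m : crude bound
    have hT := sum_bound n (Finset.Icc 1 r)
    rw [Nat.card_Icc] at hT
    have h2 : (2 * (m:ℤ) + 1) ≤ 1 + 2 * |∑ i ∈ Finset.Icc 1 r, (-1 : ℤ) ^ (i - 1 + n i)| := by
      calc (2 * (m:ℤ) + 1) = |(-1 : ℤ) ^ r + 2 * ∑ i ∈ Finset.Icc 1 r, (-1 : ℤ) ^ (i - 1 + n i)| := habs.symm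
        _ ≤ |(-1 : ℤ) ^ r| + |2 * ∑ i ∈ Finset.Icc 1 r, (-1 : ℤ) ^ (i - 1 + n i)| := abs_add_le _ _
        _ = 1 + 2 * |∑ i ∈ Finset.Icc 1 r, (-1 : ℤ) ^ (i - 1 + n i)| := by
            rw [abs_pow_neg_one, abs_mul]; norm_num
    have hrm : (r : ℤ) < (m : ℤ) := by exact_mod_cast hlt
    have hcast : ((r + 1 - 1 : ℕ) : ℤ) = (r : ℤ) := by push_cast; ring
    rw [hcast] at hT
    linarith
  rcases Nat.eq_or_lt_of_le hge with heq | hlt2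
  · -- r = m : split off the first term
    have hsplit : Finset.Icc 1 r = insert 1 (Finset.Icc 2 r) := by
      ext x; simp only [Finset.mem_Icc, Finset.mem_insert]; omega
    have h1not : (1:ℕ) ∉ Finset.Icc 2 r := by simp
    rw [hsplit, Finset.sum_insert h1not] at habs
    have hf1 : (-1 : ℤ) ^ (1 - 1 + n 1) = (-1 : ℤ) ^ (m + 1) := by
      norm_num [hn1]
    rw [hf1] at habs
    have hmr : (-1 : ℤ) ^ r = (-1 : ℤ) ^ m := by rw [heq]
    have hms : (-1 : ℤ) ^ (m + 1) = -(-1 : ℤ) ^ m := by rw [pow_succ]; ring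
    rw [hmr, hms] at habs
    have hU := sum_bound n (Finset.Icc 2 r)
    rw [Nat.card_Icc] at hU
    have hUc : ((r + 1 - 2 : ℕ) : ℤ) ≤ (m : ℤ) - 1 := by
      have : r + 1 - 2 ≤ m - 1 := by omega
      have hm1 : ((m - 1 : ℕ) : ℤ) = (m : ℤ) - 1 := by omega
      omega
    have h2 : (2 * (m:ℤ) + 1) ≤ 1 + 2 * ((m : ℤ) - 1) := by
      calc (2 * (m:ℤ) + 1)
          = |(-1 : ℤ) ^ m + 2 * (-(-1 : ℤ) ^ m + ∑ i ∈ Finset.Icc 2 r, (-1 : ℤ) ^ (i - 1 + n i))| := habs.symm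
        _ = |(-(-1 : ℤ) ^ m) + 2 * ∑ i ∈ Finset.Icc 2 r, (-1 : ℤ) ^ (i - 1 + n i)| := by congr 1; ring
        _ ≤ |(-(-1 : ℤ) ^ m)| + |2 * ∑ i ∈ Finset.Icc 2 r, (-1 : ℤ) ^ (i - 1 + n i)| := abs_add_le _ _
        _ = 1 + 2 * |∑ i ∈ Finset.Icc 2 r, (-1 : ℤ) ^ (i - 1 + n i)| := by
            rw [abs_neg, abs_pow_neg_one, abs_mul]; norm_num
        _ ≤ 1 + 2 * ((m : ℤ) - 1) := by linarith
    linarith [(by exact_mod_cast hm : (1:ℤ) ≤ (m:ℤ))]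
  · -- r = m + 1 : everything is forced
    have hreq : r = m + 1 := by omega
    have hall : ∀ i ∈ Finset.Icc 1 r, (-1 : ℤ) ^ (i - 1 + n i) = (-1 : ℤ) ^ (m + 1) := by
      intro i hi
      simp only [Finset.mem_Icc] at hi
      have h1 := hch r i hi.1 hi.2 le_rfl
      have h2 := hch i 1 le_rfl hi.1 hi.2
      have he : i - 1 + n i = m + 1 := by omega
      rw [he]
    rw [Finset.sum_congr rfl hall, Finset.sum_const, Nat.card_Icc, nsmul_eq_mul, hreq] at habs
    rcases Nat.even_or_odd (m + 1) with hpar | hpar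
    · rw [hpar.neg_one_pow] at habs
      rw [abs_eq (by positivity)] at habs
      rcases habs with h | h <;> push_cast at h <;> omega
    · rw [hpar.neg_one_pow] at habs
      rw [abs_eq (by positivity)] at habs
      rcases habs with h | h <;> push_cast at h <;> omega
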